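/- The range (column space) of the 9×9 matrix A₀ defined above equals the 4-dimensional subspace E spanned by |00⟩+|11⟩+|22⟩, λ|01⟩+μ|10⟩, λ|12⟩+μ|21⟩, λ|20⟩+μ|02⟩; in particular A₀ is a positive semidefinite matrix supported on a completely entangled subspace. -/
import Mathlib


open Matrix ComplexOrder

/-- The `9 × 9` matrix `A₀` on `ℂ³ ⊗ ℂ³` (indexed by `Fin 3 × Fin 3`). -/
def A0 (lam mu : ℝ) : Matrix (Fin 3 × Fin 3) (Fin 3 × Fin 3) ℂ :=
  Matrix.of fun p q =>
    if p.1 = p.2 ∧ q.1 = q.2 then 1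
    else if q = p then (if p.2 = p.1 + 1 then ((lam : ℂ)) ^ 2 else ((mu : ℂ)) ^ 2)
    else if q = (p.2, p.1) then 1
    else 0

/-- `|00⟩ + |11⟩ + |22⟩`. -/
def w0 : Fin 3 × Fin 3 → ℂ := fun p => if p.1 = p.2 then 1 else 0

/-- `λ|01⟩ + μ|10⟩`. -/
def w1 (lam mu : ℝ) : Fin 3 × Fin 3 → ℂ :=
  fun p => if p = (0, 1) then (lam : ℂ) else if p = (1, 0) then (mu : ℂ) else 0

/-- `λ|12⟩ + μ|21⟩`. -/
def w2 (lam mu : ℝ) : Fin 3 × Fin 3 → ℂ :=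
  fun p => if p = (1, 2) then (lam : ℂ) else if p = (2, 1) then (mu : ℂ) else 0

/-- `λ|20⟩ + μ|02⟩`. -/
def w3 (lam mu : ℝ) : Fin 3 × Fin 3 → ℂ :=
  fun p => if p = (2, 0) then (lam : ℂ) else if p = (0, 2) then (mu : ℂ) else 0

/-- The 4-dimensional subspace `E` of `ℂ³ ⊗ ℂ³`. -/
noncomputable def Espan (lam mu : ℝ) : Submodule ℂ (Fin 3 × Fin 3 → ℂ) :=
  Submodule.span ℂ {w0, w1 lam mu, w2 lam mu, w3 lam mu}

/-- Auxiliary matrix whose rows are the four spanning vectors. -/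
def Bmat (lam mu : ℝ) : Matrix (Fin 4) (Fin 3 × Fin 3) ℂ :=
  Matrix.of ![w0, w1 lam mu, w2 lam mu, w3 lam mu]

set_option maxHeartbeats 2000000 in
theorem A0_entry (lam mu : ℝ) (hmul : lam * mu = 1) :
    ∀ p q, A0 lam mu p q =
      w0 p * w0 q + w1 lam mu p * w1 lam mu q + w2 lam mu p * w2 lam mu q
        + w3 lam mu p * w3 lam mu q := by
  have hc : (lam : ℂ) * mu = 1 := by exact_mod_cast congrArg (Complex.ofReal) hmul
  rintro ⟨i, j⟩ ⟨k, l⟩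
  fin_cases i <;> fin_cases j <;> fin_cases k <;> fin_cases l <;>
    simp [A0, w0, w1, w2, w3, Prod.ext_iff, mul_comm, hc, sq]

theorem star_w (lam mu : ℝ) (p : Fin 3 × Fin 3) :
    (starRingEnd ℂ) (w0 p) = w0 p ∧ (starRingEnd ℂ) (w1 lam mu p) = w1 lam mu p ∧
    (starRingEnd ℂ) (w2 lam mu p) = w2 lam mu p ∧
    (starRingEnd ℂ) (w3 lam mu p) = w3 lam mu p := by
  refine ⟨?_, ?_, ?_, ?_⟩ <;>
    simp [w0, w1, w2, w3, apply_ite (starRingEnd ℂ), Complex.conj_ofReal]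

theorem A0_eq_BHB (lam mu : ℝ) (hmul : lam * mu = 1) :
    A0 lam mu = (Bmat lam mu)ᴴ * Bmat lam mu := by
  ext p q
  rw [A0_entry lam mu hmul]
  simp [Bmat, Matrix.mul_apply, Fin.sum_univ_four, conjTranspose_apply,
    (star_w lam mu p).1, (star_w lam mu p).2.1, (star_w lam mu p).2.2.1,
    (star_w lam mu p).2.2.2, add_assoc]

theorem A0_mulVec (lam mu : ℝ) (hmul : lam * mu = 1) (x : Fin 3 × Fin 3 → ℂ) :
    (A0 lam mu).mulVec x = (w0 ⬝ᵥ x) • w0 + (w1 lam mu ⬝ᵥ x) • w1 lam mu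
      + (w2 lam mu ⬝ᵥ x) • w2 lam mu + (w3 lam mu ⬝ᵥ x) • w3 lam mu := by
  funext p
  simp only [mulVec, dotProduct, Pi.add_apply, Pi.smul_apply, smul_eq_mul,
    A0_entry lam mu hmul, add_mul, Finset.sum_add_distrib, Finset.sum_mul, Finset.mul_sum]
  congr 1 <;> [skip; (apply Finset.sum_congr rfl; intros; ring)]
  congr 1 <;> [skip; (apply Finset.sum_congr rfl; intros; ring)]
  congr 1 <;> (apply Finset.sum_congr rfl; intros; ring)

theorem dots (lam mu : ℝ) :
    w0 ⬝ᵥ w0 = 3 ∧ w0 ⬝ᵥ w1 lam mu = 0 ∧ w0 ⬝ᵥ w2 lam mu = 0 ∧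
    w0 ⬝ᵥ w3 lam mu = 0 ∧ w1 lam mu ⬝ᵥ w1 lam mu = (lam:ℂ)^2 + (mu:ℂ)^2 ∧
    w1 lam mu ⬝ᵥ w2 lam mu = 0 ∧ w1 lam mu ⬝ᵥ w3 lam mu = 0 ∧
    w2 lam mu ⬝ᵥ w2 lam mu = (lam:ℂ)^2 + (mu:ℂ)^2 ∧ w2 lam mu ⬝ᵥ w3 lam mu = 0 ∧
    w3 lam mu ⬝ᵥ w3 lam mu = (lam:ℂ)^2 + (mu:ℂ)^2 := by
  refine ⟨?_, ?_, ?_, ?_, ?_, ?_, ?_, ?_, ?_, ?_⟩ <;>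
    simp [dotProduct, Fintype.sum_prod_type, Fin.sum_univ_three, w0, w1, w2, w3,
      Prod.ext_iff, sq]
  ring

/-- The range of `A₀` equals the subspace `E` spanned by the four vectors; in
particular `A₀` is a positive semidefinite matrix supported on a completely entangled
subspace. -/
theorem A0_range_eq_Espan (lam mu : ℝ) (hlam : 0 < lam) (hmu : 0 < mu)
    (hmul : lam * mu = 1) (hne : lam ≠ 1) :
    LinearMap.range (A0 lam mu).mulVecLin = Espan lam mu ∧
    (A0 lam mu).PosSemidef ∧
    (∀ x y : Fin 3 → ℂ, (fun p : Fin 3 × Fin 3 => x p.1 * y p.2) ∈ Espan lam mu →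
      x = 0 ∨ y = 0) := by
  have hc : (lam : ℂ) * mu = 1 := by exact_mod_cast congrArg (Complex.ofReal) hmul
  obtain ⟨d00, d01, d02, d03, d11, d12, d13, d22, d23, d33⟩ := dots lam mu
  have d10 : w1 lam mu ⬝ᵥ w0 = 0 := by rw [dotProduct_comm]; exact d01
  have d20 : w2 lam mu ⬝ᵥ w0 = 0 := by rw [dotProduct_comm]; exact d02
  have d30 : w3 lam mu ⬝ᵥ w0 = 0 := by rw [dotProduct_comm]; exact d03
  have d21 : w2 lam mu ⬝ᵥ w1 lam mu = 0 := by rw [dotProduct_comm]; exact d12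
  have d31 : w3 lam mu ⬝ᵥ w1 lam mu = 0 := by rw [dotProduct_comm]; exact d13
  have d32 : w3 lam mu ⬝ᵥ w2 lam mu = 0 := by rw [dotProduct_comm]; exact d23
  have hspos : (0:ℝ) < lam^2 + mu^2 := by positivity
  have hs : ((lam:ℂ)^2 + (mu:ℂ)^2) ≠ 0 := by
    have : ((lam^2 + mu^2 : ℝ) : ℂ) ≠ 0 := by exact_mod_cast hspos.ne'
    simpa using this
  constructor
  · apply le_antisymm
    · rintro v ⟨x, rfl⟩
      rw [mulVecLin_apply, A0_mulVec lam mu hmul]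
      have m0 : w0 ∈ Espan lam mu := Submodule.subset_span (by simp)
      have m1 : w1 lam mu ∈ Espan lam mu := Submodule.subset_span (by simp)
      have m2 : w2 lam mu ∈ Espan lam mu := Submodule.subset_span (by simp)
      have m3 : w3 lam mu ∈ Espan lam mu := Submodule.subset_span (by simp)
      exact Submodule.add_mem _ (Submodule.add_mem _ (Submodule.add_mem _
        (Submodule.smul_mem _ _ m0) (Submodule.smul_mem _ _ m1))
        (Submodule.smul_mem _ _ m2)) (Submodule.smul_mem _ _ m3)
    · rw [Espan, Submodule.span_le]
      rintro v (rfl | rfl | rfl | rfl)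
      · refine ⟨(3:ℂ)⁻¹ • w0, ?_⟩
        rw [mulVecLin_apply, mulVec_smul, A0_mulVec lam mu hmul]
        simp only [d00, d10, d20, d30, zero_smul, add_zero, smul_smul]
        norm_num
      · refine ⟨((lam:ℂ)^2 + (mu:ℂ)^2)⁻¹ • w1 lam mu, ?_⟩
        rw [mulVecLin_apply, mulVec_smul, A0_mulVec lam mu hmul]
        simp only [d01, d11, d21, d31, zero_smul, add_zero, zero_add, smul_smul,
          inv_mul_cancel₀ hs, one_smul]
      · refine ⟨((lam:ℂ)^2 + (mu:ℂ)^2)⁻¹ • w2 lam mu, ?_⟩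
        rw [mulVecLin_apply, mulVec_smul, A0_mulVec lam mu hmul]
        simp only [d02, d12, d22, d32, zero_smul, add_zero, zero_add, smul_smul,
          inv_mul_cancel₀ hs, one_smul]
      · refine ⟨((lam:ℂ)^2 + (mu:ℂ)^2)⁻¹ • w3 lam mu, ?_⟩
        rw [mulVecLin_apply, mulVec_smul, A0_mulVec lam mu hmul]
        simp only [d03, d13, d23, d33, zero_smul, add_zero, zero_add, smul_smul,
          inv_mul_cancel₀ hs, one_smul]
  constructor
  · rw [A0_eq_BHB lam mu hmul]
    exact Matrix.posSemidef_conjTranspose_mul_self _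
  · intro x y hv
    rw [Espan, Submodule.mem_span_insert] at hv
    obtain ⟨a, z, hz, hva⟩ := hv
    rw [Submodule.mem_span_insert] at hz
    obtain ⟨b, z2, hz2, hzb⟩ := hz
    rw [Submodule.mem_span_insert] at hz2
    obtain ⟨c, z3, hz3, hz2c⟩ := hz2
    rw [Submodule.mem_span_singleton] at hz3
    obtain ⟨d, rfl⟩ := hz3
    subst hz2c hzb
    have hval : ∀ p : Fin 3 × Fin 3, x p.1 * y p.2 =
        a * w0 p + b * w1 lam mu p + c * w2 lam mu p + d * w3 lam mu p := by
      intro p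
      have := congrFun hva p
      simpa [add_assoc, mul_comm] using this
    have e00 : x 0 * y 0 = a := by simpa [w0, w1, w2, w3, Prod.ext_iff] using hval (0,0)
    have e11 : x 1 * y 1 = a := by simpa [w0, w1, w2, w3, Prod.ext_iff] using hval (1,1)
    have e22 : x 2 * y 2 = a := by simpa [w0, w1, w2, w3, Prod.ext_iff] using hval (2,2)
    have e01 : x 0 * y 1 = b * lam := by simpa [w0, w1, w2, w3, Prod.ext_iff] using hval (0,1)
    have e10 : x 1 * y 0 = b * mu := by simpa [w0, w1, w2, w3, Prod.ext_iff] using hval (1,0)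
    have e12 : x 1 * y 2 = c * lam := by simpa [w0, w1, w2, w3, Prod.ext_iff] using hval (1,2)
    have e21 : x 2 * y 1 = c * mu := by simpa [w0, w1, w2, w3, Prod.ext_iff] using hval (2,1)
    have e20 : x 2 * y 0 = d * lam := by simpa [w0, w1, w2, w3, Prod.ext_iff] using hval (2,0)
    have e02 : x 0 * y 2 = d * mu := by simpa [w0, w1, w2, w3, Prod.ext_iff] using hval (0,2)
    have hb2 : b * b = a * a := by
      have h2 : (x 0 * y 1) * (x 1 * y 0) = (x 0 * y 0) * (x 1 * y 1) := by ring
      rw [e01, e10, e00, e11] at h2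
      linear_combination h2 - b * b * hc
    have hc2 : c * c = a * a := by
      have h2 : (x 1 * y 2) * (x 2 * y 1) = (x 1 * y 1) * (x 2 * y 2) := by ring
      rw [e12, e21, e11, e22] at h2
      linear_combination h2 - c * c * hc
    have hd2 : d * d = a * a := by
      have h2 : (x 2 * y 0) * (x 0 * y 2) = (x 0 * y 0) * (x 2 * y 2) := by ring
      rw [e20, e02, e00, e22] at h2
      linear_combination h2 - d * d * hc
    have ha : a = 0 := by
      by_contra ha
      have hb : b ≠ 0 := by
        intro h
        exact ha (mul_self_eq_zero.mp (by rw [← hb2, h, mul_zero]))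
      have hcne : c ≠ 0 := by
        intro h
        exact ha (mul_self_eq_zero.mp (by rw [← hc2, h, mul_zero]))
      have k1 : (x 0 * y 1) * (x 1 * y 2) = (x 0 * y 2) * (x 1 * y 1) := by ring
      rw [e01, e12, e02, e11] at k1
      have k2 : (x 1 * y 0) * (x 2 * y 1) = (x 1 * y 1) * (x 2 * y 0) := by ring
      rw [e10, e21, e11, e20] at k2
      have l1 : (lam:ℂ)^3 * (b * c) = a * d := by
        linear_combination (lam:ℂ) * k1 + a * d * hc
      have l2 : (mu:ℂ)^3 * (b * c) = a * d := by
        linear_combination (mu:ℂ) * k2 + a * d * hc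
      have hzero : ((lam:ℂ)^3 - (mu:ℂ)^3) * (b * c) = 0 := by
        rw [sub_mul, l1, l2, sub_self]
      have hlm : lam ≠ mu := by
        intro h
        apply hne
        have h1 : (lam - 1) * (lam + 1) = 0 := by nlinarith
        rcases mul_eq_zero.mp h1 with h2 | h2
        · linarith
        · linarith
      have hR : lam ^ 3 ≠ mu ^ 3 := by
        rcases lt_or_gt_of_ne hlm with h | h
        · exact ne_of_lt (by nlinarith)
        · exact ne_of_gt (by nlinarith)
      have hne3 : (lam:ℂ)^3 - (mu:ℂ)^3 ≠ 0 := sub_ne_zero.mpr (by exact_mod_cast hR)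
      rcases mul_eq_zero.mp hzero with h | h
      · exact hne3 h
      · rcases mul_eq_zero.mp h with h | h
        · exact hb h
        · exact hcne h
    have hb : b = 0 := mul_self_eq_zero.mp (by rw [hb2, ha, mul_zero])
    have hcc : c = 0 := mul_self_eq_zero.mp (by rw [hc2, ha, mul_zero])
    have hd : d = 0 := mul_self_eq_zero.mp (by rw [hd2, ha, mul_zero])
    have hall : ∀ i j : Fin 3, x i * y j = 0 := by
      intro i j
      have := hval (i, j)
      rw [ha, hb, hcc, hd] at this
      simpa using this
    by_cases hx : x = 0
    · exact Or.inl hx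
    · right
      obtain ⟨i, hi⟩ := Function.ne_iff.mp hx
      funext j
      have := hall i j
      simp only [Pi.zero_apply] at hi ⊢
      exact (mul_eq_zero.mp this).resolve_left hi
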